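/- Let A = (A_1, ..., A_d) be a set system on S of rank d (i.e., A has a partial transversal of size d), and let M* be the dual of the transversal matroid M(A). For q ∈ ℕ^d, the following are equivalent: (i) there exists a q-transversal of A that is an independent set of M*; (ii) for every J ⊆ [d], ∑_{j∈J} q_j ≤ rk*(⋃_{j∈J} A_j). -/

import Mathlib

open Finset MvPolynomial
attribute [local instance] Classical.propDecidable

variable {S : Type*} [Fintype S] [DecidableEq S]

/-- `T` is a partial transversal of the set system `A = (A j : j ∈ [d])`:
its elements can be matched injectively to distinct members of `A` containing them. -/
def IsPT {d : ℕ} (A : Fin d → Finset S) (T : Finset S) : Prop :=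
  ∃ f : S → Fin d, Set.InjOn f ↑T ∧ ∀ s ∈ T, s ∈ A (f s)

/-- Rank function of the transversal matroid `M(A)`:
the maximum size of a partial transversal contained in `T`. -/
noncomputable def tRk {d : ℕ} (A : Fin d → Finset S) (T : Finset S) : ℕ :=
  (T.powerset.filter (IsPT A)).sup Finset.card

/-- Rank function of the dual matroid `M(A)*`: `rk*(T) = rk(S∖T) + |T| − rk(S)`. -/
noncomputable def dualRk {d : ℕ} (A : Fin d → Finset S) (T : Finset S) : ℕ :=
  tRk A Tᶜ + T.card - tRk A (univ : Finset S)

/-- Lattice points of the parking polymatroid `P(A)`. -/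
def inP {d : ℕ} (A : Fin d → Finset S) (q : Fin d →₀ ℕ) : Prop :=
  ∀ J : Finset (Fin d), ∑ j ∈ J, q j ≤ dualRk A (J.biUnion A)

/-- Rank function of the matroid of a vector configuration:
the columns `v_s` of the matrix `V`. -/
noncomputable def vRk {k : Type*} [Field k] {d : ℕ} (V : Matrix (Fin d) S k) (T : Finset S) : ℕ :=
  Module.finrank k (Submodule.span k ((fun s j => V j s) '' (T : Set S)))

/-- The power ideal `I(V)`, generated by `ℓ_H ^ ρ_H` over all hyperplanes `H` of `V`:
a hyperplane is cut out by a nonzero linear form `ℓ` such that the vectors it kills span a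
rank-`(d−1)` subspace, and `ρ_H` is the number of vectors of `V` outside `H`. -/
noncomputable def powerIdeal {k : Type*} [Field k] {d : ℕ} (V : Matrix (Fin d) S k) :
    Ideal (MvPolynomial (Fin d) k) :=
  Ideal.span { p | ∃ ℓ : Fin d → k, ℓ ≠ 0 ∧
    vRk V ((univ : Finset S).filter fun s => ∑ j, ℓ j * V j s = 0) = d - 1 ∧
    p = (∑ j, C (ℓ j) * X j) ^ (((univ : Finset S).filter fun s => ¬ (∑ j, ℓ j * V j s = 0)).card) }

/-- `T` is a `q`-transversal of `A`: a disjoint union of sets `T j ⊆ A j` with `|T j| = q j`. -/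
def IsQTransversal {d : ℕ} (A : Fin d → Finset S) (q : Fin d → ℕ) (T : Finset S) : Prop :=
  ∃ Tj : Fin d → Finset S, (∀ j, Tj j ⊆ A j) ∧ (∀ j, (Tj j).card = q j) ∧
    (∀ i j, i ≠ j → Disjoint (Tj i) (Tj j)) ∧ T = (univ : Finset (Fin d)).biUnion Tj

set_option linter.unusedSectionVars false

/-- Easy direction of the rank formula. -/
lemma tRk_le_val {d : ℕ} (A : Fin d → Finset S) (T : Finset S) (J : Finset (Fin d)) :
    tRk A T ≤ (T ∩ J.biUnion A).card + (d - J.card) := by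
  apply Finset.sup_le
  intro P hP
  rw [mem_filter, mem_powerset] at hP
  obtain ⟨hPT, f, hinj, hmem⟩ := hP
  have hsplit := Finset.card_filter_add_card_filter_not (s := P) (p := fun s => f s ∈ J)
  have h1 : (P.filter (fun s => f s ∈ J)).card ≤ (T ∩ J.biUnion A).card := by
    apply card_le_card
    intro s hs
    rw [mem_filter] at hs
    rw [mem_inter, mem_biUnion]
    exact ⟨hPT hs.1, f s, hs.2, hmem s hs.1⟩
  have h2 : (P.filter (fun s => ¬ f s ∈ J)).card ≤ (univ \ J).card := by
    apply Finset.card_le_card_of_injOn f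
    · intro s hs
      rw [mem_coe, mem_filter] at hs
      simp [hs.2]
    · intro a ha b hb hab
      simp only [coe_filter, Set.mem_setOf_eq] at ha hb
      exact hinj (mem_coe.2 ha.1) (mem_coe.2 hb.1) hab
  have h3 : (univ \ J).card = d - J.card := by
    rw [Finset.card_sdiff_of_subset (subset_univ _)]
    simp
  omega

lemma val_le_tRk {d : ℕ} (A : Fin d → Finset S) (T : Finset S) (m : ℕ)
    (hm : ∀ J : Finset (Fin d), m ≤ (T ∩ J.biUnion A).card + (d - J.card)) :
    m ≤ tRk A T := by
  rcases Nat.eq_zero_or_pos m with rfl | hm0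
  · exact Nat.zero_le _
  have hmd : m ≤ d := by simpa using hm ∅
  have hd0 : 0 < d := lt_of_lt_of_le hm0 hmd
  -- T is nonempty
  have hTne : (T ∩ (univ : Finset (Fin d)).biUnion A).Nonempty := by
    rw [← card_pos]
    have := hm univ
    simp only [card_univ, Fintype.card_fin, Nat.sub_self, add_zero] at this
    omega
  obtain ⟨s0, hs0⟩ := hTne
  set B : Fin d → Finset (S ⊕ ℕ) :=
    fun j => ((A j ∩ T).image Sum.inl) ∪ ((Finset.range (d - m)).image Sum.inr) with hB
  have hall : ∀ s : Finset (Fin d), s.card ≤ (s.biUnion B).card := by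
    intro s
    rcases s.eq_empty_or_nonempty with rfl | hs
    · simp
    have hsub : ((s.biUnion (fun j => A j ∩ T)).image Sum.inl) ∪
        ((Finset.range (d - m)).image Sum.inr) ⊆ s.biUnion B := by
      apply union_subset
      · intro x hx
        simp only [mem_image, mem_biUnion] at hx
        obtain ⟨y, ⟨j, hj, hy⟩, rfl⟩ := hx
        rw [mem_biUnion]
        refine ⟨j, hj, ?_⟩
        rw [hB, mem_union]
        exact Or.inl (mem_image_of_mem _ hy)
      · intro x hx
        rw [mem_biUnion]
        obtain ⟨j, hj⟩ := hs
        refine ⟨j, hj, ?_⟩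
        rw [hB, mem_union]
        exact Or.inr hx
    have hcard : (((s.biUnion (fun j => A j ∩ T)).image Sum.inl) ∪
        ((Finset.range (d - m)).image Sum.inr)).card
        = (s.biUnion (fun j => A j ∩ T)).card + (d - m) := by
      rw [card_union_of_disjoint, card_image_of_injective _ Sum.inl_injective,
        card_image_of_injective _ Sum.inr_injective, card_range]
      simp [disjoint_left]
    have heq : s.biUnion (fun j => A j ∩ T) = T ∩ s.biUnion A := by
      ext x
      simp only [mem_biUnion, mem_inter]
      tauto
    have hms := hm s
    have hsd : s.card ≤ d := by
      have := card_le_univ s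
      simpa using this
    have := card_le_card hsub
    rw [hcard, heq] at this
    omega
  obtain ⟨g, hginj, hgmem⟩ := (Finset.all_card_le_biUnion_card_iff_exists_injective B).1 hall
  set K : Finset (Fin d) := univ.filter (fun j => (g j).isLeft) with hK
  set h : Fin d → S := fun j => Sum.elim id (fun _ => s0) (g j) with hh
  have hgK : ∀ j ∈ K, g j = Sum.inl (h j) := by
    intro j hj
    rw [hK, mem_filter] at hj
    rcases hgj : g j with x | n
    · simp [hh, hgj]
    · rw [hgj] at hj; simp at hj
  have hKc : (univ.filter (fun j => ¬ (g j).isLeft)).card ≤ d - m := by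
    have : ∀ j ∈ univ.filter (fun j => ¬ (g j).isLeft), g j ∈ (Finset.range (d - m)).image Sum.inr := by
      intro j hj
      rw [mem_filter] at hj
      have := hgmem j
      rw [hB] at this
      simp only [mem_union, mem_image] at this
      rcases this with ⟨y, _, hy⟩ | hy
      · exfalso; rw [← hy] at hj; simp at hj
      · simpa using hy
    calc (univ.filter (fun j => ¬ (g j).isLeft)).card
        ≤ ((Finset.range (d - m)).image Sum.inr : Finset (S ⊕ ℕ)).card :=
          Finset.card_le_card_of_injOn g this (fun a _ b _ hab => hginj hab)
      _ = d - m := by rw [card_image_of_injective _ Sum.inr_injective, card_range]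
  have hKcard : m ≤ K.card := by
    have h5 := Finset.card_filter_add_card_filter_not (s := (univ : Finset (Fin d)))
      (p := fun j => (g j).isLeft)
    simp only [card_univ, Fintype.card_fin] at h5
    have h6 : K.card = (univ.filter (fun j => (g j).isLeft)).card := by rw [hK]
    omega
  have hinjK : Set.InjOn h ↑K := by
    intro a ha b hb hab
    apply hginj
    rw [hgK a ha, hgK b hb, hab]
  set T' : Finset S := K.image h with hT'
  have hAj : ∀ j ∈ K, h j ∈ A j ∩ T := by
    intro j hj
    have h7 := hgmem j
    rw [hB, hgK j hj, mem_union] at h7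
    rcases h7 with h7 | h7
    · rw [mem_image] at h7
      obtain ⟨y, hy, hy2⟩ := h7
      rw [Sum.inl.injEq] at hy2
      rw [← hy2]
      rw [mem_inter] at hy ⊢
      exact ⟨hy.1, hy.2⟩
    · rw [mem_image] at h7
      obtain ⟨n, _, hn⟩ := h7
      exact absurd hn (by simp)
  have hne : Nonempty (Fin d) := ⟨⟨0, hd0⟩⟩
  have hex : ∀ x ∈ T', ∃ j, j ∈ K ∧ h j = x := by
    intro x hx
    rw [hT', mem_image] at hx
    obtain ⟨j, hj, rfl⟩ := hx
    exact ⟨j, hj, rfl⟩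
  have hPT : IsPT A T' := by
    refine ⟨fun x => if hx : ∃ j, j ∈ K ∧ h j = x then hx.choose
      else Classical.arbitrary (Fin d), ?_, ?_⟩
    · intro x1 hx1 x2 hx2 heq
      obtain h1 := hex x1 (mem_coe.1 hx1)
      obtain h2 := hex x2 (mem_coe.1 hx2)
      simp only [dif_pos h1, dif_pos h2] at heq
      have e1 := h1.choose_spec.2
      have e2 := h2.choose_spec.2
      rw [← e1, ← e2, heq]
    · intro x hx
      obtain h1 := hex x hx
      simp only [dif_pos h1]
      have e1 := h1.choose_spec
      have := hAj _ e1.1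
      rw [e1.2, mem_inter] at this
      exact this.1
  have hsubT : T' ⊆ T := by
    intro x hx
    rw [hT', mem_image] at hx
    obtain ⟨j, hj, rfl⟩ := hx
    exact (mem_inter.1 (hAj j hj)).2
  have hmem2 : T' ∈ T.powerset.filter (IsPT A) := mem_filter.2 ⟨mem_powerset.2 hsubT, hPT⟩
  have hle := Finset.le_sup (f := Finset.card) hmem2
  have hcardT' : T'.card = K.card := Finset.card_image_of_injOn hinjK
  calc m ≤ K.card := hKcard
  _ = T'.card := hcardT'.symm
  _ ≤ tRk A T := hle

lemma tRk_exists_min {d : ℕ} (A : Fin d → Finset S) (T : Finset S) :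
    ∃ J : Finset (Fin d), tRk A T = (T ∩ J.biUnion A).card + (d - J.card) := by
  obtain ⟨J, _, hJ⟩ := Finset.exists_min_image (univ : Finset (Finset (Fin d)))
    (fun J => (T ∩ J.biUnion A).card + (d - J.card)) ⟨∅, mem_univ _⟩
  refine ⟨J, le_antisymm (tRk_le_val A T J) ?_⟩
  exact val_le_tRk A T _ (fun J' => hJ J' (mem_univ _))

lemma tRk_mono {d : ℕ} (A : Fin d → Finset S) {X Y : Finset S} (hXY : X ⊆ Y) :
    tRk A X ≤ tRk A Y :=
  Finset.sup_mono (Finset.filter_subset_filter _ (Finset.powerset_mono.2 hXY))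

lemma tRk_le_card {d : ℕ} (A : Fin d → Finset S) (T : Finset S) : tRk A T ≤ T.card := by
  apply Finset.sup_le
  intro P hP
  rw [mem_filter, mem_powerset] at hP
  exact card_le_card hP.1

lemma tRk_le_add {d : ℕ} (A : Fin d → Finset S) (U V : Finset S) :
    tRk A U ≤ tRk A V + (U \ V).card := by
  obtain ⟨J, hJ⟩ := tRk_exists_min A V
  have h1 := tRk_le_val A U J
  have h2 : (U ∩ J.biUnion A).card ≤ (V ∩ J.biUnion A).card + (U \ V).card := by
    calc (U ∩ J.biUnion A).card ≤ ((V ∩ J.biUnion A) ∪ (U \ V)).card := by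
          apply card_le_card
          intro s hs
          rw [mem_inter] at hs
          by_cases hV : s ∈ V
          · exact mem_union_left _ (mem_inter.2 ⟨hV, hs.2⟩)
          · exact mem_union_right _ (mem_sdiff.2 ⟨hs.1, hV⟩)
      _ ≤ _ := card_union_le _ _
  omega

lemma tRk_submod {d : ℕ} (A : Fin d → Finset S) (X Y : Finset S) :
    tRk A (X ∪ Y) + tRk A (X ∩ Y) ≤ tRk A X + tRk A Y := by
  obtain ⟨Jx, hJx⟩ := tRk_exists_min A X
  obtain ⟨Jy, hJy⟩ := tRk_exists_min A Y
  have h1 := tRk_le_val A (X ∪ Y) (Jx ∩ Jy)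
  have h2 := tRk_le_val A (X ∩ Y) (Jx ∪ Jy)
  -- card part
  set P := X ∩ Jx.biUnion A with hP
  set Q := Y ∩ Jy.biUnion A with hQ
  have hU1 : (X ∪ Y) ∩ (Jx ∩ Jy).biUnion A ⊆ P ∪ Q := by
    intro s hs
    simp only [mem_inter, mem_union, mem_biUnion, mem_inter] at hs
    obtain ⟨hxy, j, hj, hsA⟩ := hs
    rcases hxy with hx | hy
    · exact mem_union_left _ (mem_inter.2 ⟨hx, mem_biUnion.2 ⟨j, hj.1, hsA⟩⟩)
    · exact mem_union_right _ (mem_inter.2 ⟨hy, mem_biUnion.2 ⟨j, hj.2, hsA⟩⟩)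
  have hU2 : (X ∩ Y) ∩ (Jx ∪ Jy).biUnion A ⊆ P ∪ Q := by
    intro s hs
    simp only [mem_inter, mem_biUnion] at hs
    obtain ⟨⟨hx, hy⟩, j, hj, hsA⟩ := hs
    rw [mem_union] at hj
    rcases hj with hj | hj
    · exact mem_union_left _ (mem_inter.2 ⟨hx, mem_biUnion.2 ⟨j, hj, hsA⟩⟩)
    · exact mem_union_right _ (mem_inter.2 ⟨hy, mem_biUnion.2 ⟨j, hj, hsA⟩⟩)
  have hI : ((X ∪ Y) ∩ (Jx ∩ Jy).biUnion A) ∩ ((X ∩ Y) ∩ (Jx ∪ Jy).biUnion A) ⊆ P ∩ Q := by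
    intro s hs
    simp only [mem_inter, mem_biUnion] at hs
    obtain ⟨⟨_, j, hj, hsA⟩, ⟨hx, hy⟩, _⟩ := hs
    exact mem_inter.2 ⟨mem_inter.2 ⟨hx, mem_biUnion.2 ⟨j, hj.1, hsA⟩⟩,
      mem_inter.2 ⟨hy, mem_biUnion.2 ⟨j, hj.2, hsA⟩⟩⟩
  have hcard : ((X ∪ Y) ∩ (Jx ∩ Jy).biUnion A).card + ((X ∩ Y) ∩ (Jx ∪ Jy).biUnion A).card
      ≤ P.card + Q.card := by
    rw [← card_union_add_card_inter]
    have ha := card_le_card (union_subset hU1 hU2)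
    have hb := card_le_card hI
    have hc := card_union_add_card_inter P Q
    omega
  have hJcard := card_union_add_card_inter Jx Jy
  have hJxd : Jx.card ≤ d := by simpa using card_le_univ Jx
  have hJyd : Jy.card ≤ d := by simpa using card_le_univ Jy
  have hJud : (Jx ∪ Jy).card ≤ d := by simpa using card_le_univ (Jx ∪ Jy)
  have hJid : (Jx ∩ Jy).card ≤ d := by simpa using card_le_univ (Jx ∩ Jy)
  omega

lemma tRk_compl_bounds {d : ℕ} (A : Fin d → Finset S) (hrank : tRk A (univ : Finset S) = d)
    (T : Finset S) : tRk A Tᶜ ≤ d ∧ d ≤ tRk A Tᶜ + T.card := by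
  constructor
  · exact le_trans (tRk_mono A (subset_univ _)) (le_of_eq hrank)
  · have := tRk_le_add A (univ : Finset S) Tᶜ
    have he : (univ : Finset S) \ Tᶜ = T := by simp
    rw [he, hrank] at this
    exact this

lemma dRk_le_card {d : ℕ} (A : Fin d → Finset S) (hrank : tRk A (univ : Finset S) = d)
    (T : Finset S) : dualRk A T ≤ T.card := by
  obtain ⟨h1, h2⟩ := tRk_compl_bounds A hrank T
  rw [dualRk, hrank]
  omega

lemma dRk_mono {d : ℕ} (A : Fin d → Finset S) (hrank : tRk A (univ : Finset S) = d)
    {X Y : Finset S} (hXY : X ⊆ Y) : dualRk A X ≤ dualRk A Y := by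
  obtain ⟨h1, h2⟩ := tRk_compl_bounds A hrank X
  obtain ⟨h3, h4⟩ := tRk_compl_bounds A hrank Y
  have h5 : tRk A Xᶜ ≤ tRk A Yᶜ + (Xᶜ \ Yᶜ).card := tRk_le_add A Xᶜ Yᶜ
  have h6 : Xᶜ \ Yᶜ = Y \ X := by
    ext s; simp only [mem_sdiff, mem_compl]; tauto
  have h7 : (Y \ X).card = Y.card - X.card := card_sdiff_of_subset hXY
  have h8 : X.card ≤ Y.card := card_le_card hXY
  rw [h6, h7] at h5
  rw [dualRk, dualRk, hrank]
  omega

lemma dRk_diff {d : ℕ} (A : Fin d → Finset S) (hrank : tRk A (univ : Finset S) = d)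
    {X Y : Finset S} (hXY : Y ⊆ X) : dualRk A X + Y.card ≤ dualRk A Y + X.card := by
  obtain ⟨h1, h2⟩ := tRk_compl_bounds A hrank X
  obtain ⟨h3, h4⟩ := tRk_compl_bounds A hrank Y
  have h5 : tRk A Xᶜ ≤ tRk A Yᶜ := tRk_mono A (by intro s; simp only [mem_compl]; intro h hs; exact h (hXY hs))
  rw [dualRk, dualRk, hrank]
  omega

lemma dRk_submod {d : ℕ} (A : Fin d → Finset S) (hrank : tRk A (univ : Finset S) = d)
    (X Y : Finset S) : dualRk A (X ∪ Y) + dualRk A (X ∩ Y) ≤ dualRk A X + dualRk A Y := by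
  have hs := tRk_submod A Xᶜ Yᶜ
  have e1 : Xᶜ ∪ Yᶜ = (X ∩ Y)ᶜ := (compl_inter X Y).symm
  have e2 : Xᶜ ∩ Yᶜ = (X ∪ Y)ᶜ := (compl_union X Y).symm
  rw [e1, e2] at hs
  obtain ⟨h1, h2⟩ := tRk_compl_bounds A hrank X
  obtain ⟨h3, h4⟩ := tRk_compl_bounds A hrank Y
  obtain ⟨h5, h6⟩ := tRk_compl_bounds A hrank (X ∪ Y)
  obtain ⟨h7, h8⟩ := tRk_compl_bounds A hrank (X ∩ Y)
  have hc := card_union_add_card_inter X Y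
  simp only [dualRk, hrank]
  omega

lemma rado_aux {ι : Type*} [Fintype ι] [DecidableEq ι] (f : Finset S → ℕ)
    (hmono : ∀ ⦃X Y : Finset S⦄, X ⊆ Y → f X ≤ f Y)
    (hcard : ∀ X : Finset S, f X ≤ X.card)
    (hsub : ∀ X Y : Finset S, f (X ∪ Y) + f (X ∩ Y) ≤ f X + f Y) :
    ∀ (n : ℕ) (B : ι → Finset S), (∑ i, (B i).card ≤ n) →
      (∀ J : Finset ι, J.card ≤ f (J.biUnion B)) →
      ∃ e : ι → S, Function.Injective e ∧ (∀ i, e i ∈ B i) ∧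
        f (Finset.univ.image e) = Fintype.card ι := by
  intro n
  induction n using Nat.strong_induction_on with
  | _ n ih =>
  intro B hn hcond
  have hne : ∀ i, (B i).Nonempty := by
    intro i
    rw [← card_pos]
    have h1 := hcond {i}
    have h2 := hcard ((({i} : Finset ι)).biUnion B)
    have h3 : (({i} : Finset ι).biUnion B).card ≤ (B i).card := by
      apply card_le_card; intro s hs; simpa using hs
    simp only [card_singleton] at h1
    omega
  by_cases hsing : ∀ i, (B i).card ≤ 1
  · -- base case: all singletons
    choose e heB using hne
    have hBi : ∀ i, B i = {e i} := by
      intro i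
      have h1 := hsing i
      apply Finset.eq_singleton_iff_unique_mem.2
      refine ⟨heB i, fun x hx => ?_⟩
      by_contra hxe
      have : 2 ≤ (B i).card := Finset.one_lt_card.2 ⟨x, hx, e i, heB i, hxe⟩
      omega
    have himg : Finset.univ.image e = Finset.univ.biUnion B := by
      ext s
      simp only [mem_image, mem_biUnion, mem_univ, true_and]
      constructor
      · rintro ⟨i, rfl⟩; exact ⟨i, heB i⟩
      · rintro ⟨i, hs⟩; rw [hBi i, mem_singleton] at hs; exact ⟨i, hs.symm⟩
    have h1 := hcond univ
    rw [card_univ, ← himg] at h1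
    have h2 := hcard (Finset.univ.image e)
    have h3 : (Finset.univ.image e).card ≤ Fintype.card ι := by
      rw [← card_univ]; exact card_image_le
    have h4 : f (Finset.univ.image e) = Fintype.card ι := le_antisymm (le_trans h2 h3) h1
    have h5 : (Finset.univ.image e).card = Fintype.card ι := by omega
    refine ⟨e, ?_, heB, h4⟩
    rw [← card_univ] at h5
    have := Finset.injOn_of_card_image_eq (by rw [h5])
    intro a b hab
    exact this (mem_coe.2 (mem_univ a)) (mem_coe.2 (mem_univ b)) hab
  · push_neg at hsing
    obtain ⟨i, hi⟩ := hsing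
    have h2i : 2 ≤ (B i).card := hi
    obtain ⟨x, hx, y, hy, hxy⟩ := Finset.one_lt_card.1 h2i
    -- try removing x or y from B i
    have key : ∀ z ∈ B i, (∀ J : Finset ι, J.card ≤ f (J.biUnion (Function.update B i ((B i).erase z)))) →
        ∃ e : ι → S, Function.Injective e ∧ (∀ i, e i ∈ B i) ∧
          f (Finset.univ.image e) = Fintype.card ι := by
      intro z hz hcond'
      have hdec : ∑ j, ((Function.update B i ((B i).erase z)) j).card < n := by
        have hlt : ∑ j, ((Function.update B i ((B i).erase z)) j).card < ∑ j, (B j).card := by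
          apply Finset.sum_lt_sum
          · intro j _
            by_cases hj : j = i
            · subst hj; rw [Function.update_self]; exact card_le_card (erase_subset _ _)
            · rw [Function.update_of_ne hj]
          · refine ⟨i, mem_univ i, ?_⟩
            rw [Function.update_self, card_erase_of_mem hz]
            omega
        omega
      obtain ⟨e, he1, he2, he3⟩ := ih _ hdec _ le_rfl hcond'
      refine ⟨e, he1, fun j => ?_, he3⟩
      have := he2 j
      by_cases hj : j = i
      · subst hj; rw [Function.update_self] at this; exact erase_subset _ _ this
      · rwa [Function.update_of_ne hj] at this
    by_cases hcx : ∀ J : Finset ι, J.card ≤ f (J.biUnion (Function.update B i ((B i).erase x)))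
    · exact key x hx hcx
    by_cases hcy : ∀ J : Finset ι, J.card ≤ f (J.biUnion (Function.update B i ((B i).erase y)))
    · exact key y hy hcy
    exfalso
    push_neg at hcx hcy
    obtain ⟨Jx', hJx'⟩ := hcx
    obtain ⟨Jy', hJy'⟩ := hcy
    have hmemJ : ∀ (z : S) (J : Finset ι), f (J.biUnion (Function.update B i ((B i).erase z))) < J.card → i ∈ J := by
      intro z J hJ
      by_contra hiJ
      have : J.biUnion (Function.update B i ((B i).erase z)) = J.biUnion B := by
        apply Finset.biUnion_congr rfl
        intro j hj
        rw [Function.update_of_ne (fun h => hiJ (by rw [← h]; exact hj))]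
      rw [this] at hJ
      exact absurd (hcond J) (by omega)
    have hix := hmemJ x Jx' hJx'
    have hiy := hmemJ y Jy' hJy'
    have hbiU : ∀ (z : S) (J : Finset ι), i ∈ J →
        J.biUnion (Function.update B i ((B i).erase z)) = (B i).erase z ∪ (J.erase i).biUnion B := by
      intro z J hiJ
      conv_lhs => rw [← Finset.insert_erase hiJ]
      rw [Finset.biUnion_insert, Function.update_self]
      congr 1
      apply Finset.biUnion_congr rfl
      intro j hj
      rw [Function.update_of_ne (Finset.ne_of_mem_erase hj)]
    rw [hbiU x Jx' hix] at hJx'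
    rw [hbiU y Jy' hiy] at hJy'
    set Jx := Jx'.erase i with hJxdef
    set Jy := Jy'.erase i with hJydef
    have hfx : f ((B i).erase x ∪ Jx.biUnion B) ≤ Jx.card := by
      have h9 := card_erase_of_mem hix
      rw [← hJxdef] at h9
      omega
    have hfy : f ((B i).erase y ∪ Jy.biUnion B) ≤ Jy.card := by
      have h9 := card_erase_of_mem hiy
      rw [← hJydef] at h9
      omega
    set X := (B i).erase x ∪ Jx.biUnion B with hX
    set Y := (B i).erase y ∪ Jy.biUnion B with hY
    have hun : (insert i (Jx ∪ Jy)).biUnion B ⊆ X ∪ Y := by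
      rw [Finset.biUnion_insert]
      apply union_subset
      · intro s hs
        by_cases hsx : s = x
        · subst hsx
          exact mem_union_right _ (mem_union_left _ (mem_erase.2 ⟨hxy, hs⟩))
        · exact mem_union_left _ (mem_union_left _ (mem_erase.2 ⟨hsx, hs⟩))
      · intro s hs
        rw [mem_biUnion] at hs
        obtain ⟨j, hj, hsj⟩ := hs
        rw [mem_union] at hj
        rcases hj with hj | hj
        · exact mem_union_left _ (mem_union_right _ (mem_biUnion.2 ⟨j, hj, hsj⟩))
        · exact mem_union_right _ (mem_union_right _ (mem_biUnion.2 ⟨j, hj, hsj⟩))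
    have hun' : (Jx ∩ Jy).biUnion B ⊆ X ∩ Y := by
      intro s hs
      rw [mem_biUnion] at hs
      obtain ⟨j, hj, hsj⟩ := hs
      rw [mem_inter] at hj ⊢
      exact ⟨mem_union_right _ (mem_biUnion.2 ⟨j, hj.1, hsj⟩),
        mem_union_right _ (mem_biUnion.2 ⟨j, hj.2, hsj⟩)⟩
    have hiJxy : i ∉ Jx ∪ Jy := by
      rw [mem_union]
      rintro (h | h)
      · exact absurd h (notMem_erase i Jx')
      · exact absurd h (notMem_erase i Jy')
    have h1 := hcond (insert i (Jx ∪ Jy))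
    rw [card_insert_of_notMem hiJxy] at h1
    have h2 := hcond (Jx ∩ Jy)
    have h3 : f ((insert i (Jx ∪ Jy)).biUnion B) ≤ f (X ∪ Y) := hmono hun
    have h4 : f ((Jx ∩ Jy).biUnion B) ≤ f (X ∩ Y) := hmono hun'
    have h5 := hsub X Y
    have h6 := card_union_add_card_inter Jx Jy
    omega

set_option maxHeartbeats 2000000 in
theorem stmt2' {d : ℕ} (A : Fin d → Finset S) (hrank : tRk A (univ : Finset S) = d)
    (q : Fin d → ℕ) :
    (∃ T : Finset S, (∃ Tj : Fin d → Finset S, (∀ j, Tj j ⊆ A j) ∧ (∀ j, (Tj j).card = q j) ∧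
      (∀ i j, i ≠ j → Disjoint (Tj i) (Tj j)) ∧ T = (univ : Finset (Fin d)).biUnion Tj) ∧
      dualRk A T = T.card) ↔
      ∀ J : Finset (Fin d), ∑ j ∈ J, q j ≤ dualRk A (J.biUnion A) := by
  constructor
  · rintro ⟨T, ⟨Tj, hTA, hTc, hTd, hTu⟩, hdT⟩ J
    have hdisj : ∀ a ∈ J, ∀ b ∈ J, a ≠ b → Disjoint (Tj a) (Tj b) :=
      fun a _ b _ hab => hTd a b hab
    have hTJcard : (J.biUnion Tj).card = ∑ j ∈ J, q j := by
      rw [card_biUnion hdisj]; exact Finset.sum_congr rfl (fun j _ => hTc j)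
    have hsubT : J.biUnion Tj ⊆ T := by
      rw [hTu]; exact biUnion_subset_biUnion_of_subset_left _ (subset_univ J)
    have hsubA : J.biUnion Tj ⊆ J.biUnion A := by
      intro s hs
      rw [mem_biUnion] at hs ⊢
      obtain ⟨j, hj, hsj⟩ := hs
      exact ⟨j, hj, hTA j hsj⟩
    have h1 := dRk_diff A hrank hsubT
    have h2 := dRk_mono A hrank hsubA
    have h3 := dRk_le_card A hrank (J.biUnion Tj)
    have h4 := card_le_card hsubT
    rw [← hTJcard]
    omega
  · intro hcond
    have hcondB : ∀ J' : Finset ((j : Fin d) × Fin (q j)),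
        J'.card ≤ dualRk A (J'.biUnion (fun p => A p.1)) := by
      intro J'
      set J := J'.image Sigma.fst with hJ
      have hBU : J'.biUnion (fun p => A p.1) = J.biUnion A := by
        ext s
        simp only [mem_biUnion, hJ, mem_image]
        constructor
        · rintro ⟨p, hp, hs⟩; exact ⟨p.1, ⟨p, hp, rfl⟩, hs⟩
        · rintro ⟨j, ⟨p, hp, rfl⟩, hs⟩; exact ⟨p, hp, hs⟩
      have hcardJ' : J'.card ≤ ∑ j ∈ J, q j := by
        have hsub : J' ⊆ J.sigma (fun j => (univ : Finset (Fin (q j)))) := by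
          intro p hp; rw [mem_sigma]; exact ⟨mem_image_of_mem _ hp, mem_univ _⟩
        have hc := card_le_card hsub
        rw [card_sigma] at hc
        simpa using hc
      rw [hBU]
      exact le_trans hcardJ' (hcond J)
    obtain ⟨e, hinj, hmem, hf⟩ := rado_aux (ι := (j : Fin d) × Fin (q j)) (dualRk A)
      (fun X Y h => dRk_mono A hrank h) (dRk_le_card A hrank) (dRk_submod A hrank)
      _ (fun p => A p.1) le_rfl hcondB
    have hinjj : ∀ j : Fin d, Function.Injective (fun k : Fin (q j) => e ⟨j, k⟩) := by
      intro j k1 k2 h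
      have := hinj h
      rw [Sigma.mk.inj_iff] at this
      exact eq_of_heq this.2
    refine ⟨univ.image e, ⟨fun j => (univ.image (fun k : Fin (q j) => e ⟨j, k⟩)), ?_, ?_, ?_, ?_⟩, ?_⟩
    · intro j s hs
      rw [mem_image] at hs
      obtain ⟨k, _, rfl⟩ := hs
      exact hmem ⟨j, k⟩
    · intro j
      rw [card_image_of_injective _ (hinjj j), card_univ, Fintype.card_fin]
    · intro a b hab
      rw [Finset.disjoint_left]
      intro s hsa hsb
      rw [mem_image] at hsa hsb
      obtain ⟨k, _, hk⟩ := hsa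
      obtain ⟨l, _, hl⟩ := hsb
      rw [← hl] at hk
      have := hinj hk
      rw [Sigma.mk.inj_iff] at this
      exact hab this.1
    · ext s
      simp only [mem_image, mem_biUnion, mem_univ, true_and]
      constructor
      · rintro ⟨⟨j, k⟩, rfl⟩; exact ⟨j, k, rfl⟩
      · rintro ⟨j, k, rfl⟩; exact ⟨⟨j, k⟩, rfl⟩
    · rw [hf, Finset.card_image_of_injective _ hinj, card_univ]

/-- Rado's theorem for polymatroids: for a rank-`d` set system `A`, `A` has a `q`-transversal
independent in the dual matroid `M*` iff `∑_{j∈J} q_j ≤ rk*(⋃_{j∈J} A_j)` for all `J`. -/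
theorem stmt2 {d : ℕ} (A : Fin d → Finset S) (hrank : tRk A (univ : Finset S) = d)
    (q : Fin d → ℕ) :
    (∃ T : Finset S, IsQTransversal A q T ∧ dualRk A T = T.card) ↔
      ∀ J : Finset (Fin d), ∑ j ∈ J, q j ≤ dualRk A (J.biUnion A) :=
  stmt2' A hrank q
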